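/- Let A be an n×n real matrix that is entrywise nonnegative, symmetric and positive definite, and let x ∈ ℝ^n be a nonzero entrywise nonnegative vector that is not an eigenvector of A. Then the sequence (c_k(A,x))_{k≥1} is strictly increasing and c_k(A,x) ≤ ρ(A) for every k ≥ 1; moreover, if x is not orthogonal to the eigenspace of A for the eigenvalue ρ(A), then c_k(A,x) converges to ρ(A) as k → ∞. -/

import Mathlib

open Matrix Filter

/-- The Perron value (spectral radius) of a real square matrix: the supremum of the
absolute values of its complex eigenvalues (roots of the characteristic polynomial). -/
noncomputable def perronValue {n : ℕ} (A : Matrix (Fin n) (Fin n) ℝ) : ℝ :=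
  sSup {r : ℝ | ∃ μ : ℂ, ((A.map Complex.ofReal).charpoly).IsRoot μ ∧ r = ‖μ‖}

/-- A Perron vector of `A`: an eigenvector associated with the Perron value of `A`. -/
def IsPerronVector {n : ℕ} (A : Matrix (Fin n) (Fin n) ℝ) (x : Fin n → ℝ) : Prop :=
  x ≠ 0 ∧ A.mulVec x = perronValue A • x

/-- `c_k(A,x) = (xᵀ A^k x)/(xᵀ A^{k-1} x)` for `k ≥ 1`. -/
noncomputable def cSeq {n : ℕ} (A : Matrix (Fin n) (Fin n) ℝ) (x : Fin n → ℝ) (k : ℕ) : ℝ :=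
  (x ⬝ᵥ (A ^ k).mulVec x) / (x ⬝ᵥ (A ^ (k - 1)).mulVec x)

open Polynomial in
theorem charpoly_conj' {n : ℕ} (U V D : Matrix (Fin n) (Fin n) ℝ) (h1 : U * V = 1)
    (h2 : V * U = 1) : (U * D * V).charpoly = D.charpoly := by
  unfold Matrix.charpoly
  have hmap : (U.map (C : ℝ →+* Polynomial ℝ)) * (V.map C) = 1 := by
    rw [← Matrix.map_mul, h1]; simp
  have hmap2 : (V.map (C : ℝ →+* Polynomial ℝ)) * (U.map C) = 1 := by
    rw [← Matrix.map_mul, h2]; simp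
  have : charmatrix (U * D * V) = (U.map C) * charmatrix D * (V.map C) := by
    unfold charmatrix
    rw [Matrix.mul_sub, Matrix.sub_mul]
    congr 1
    · rw [Matrix.mul_assoc, Matrix.scalar_commute _ (fun r => (Commute.all _ _)) (V.map C) |>.eq,
        ← Matrix.mul_assoc, hmap, Matrix.one_mul]
    · simp only [RingHom.mapMatrix_apply, Matrix.map_mul]
  rw [this, Matrix.det_mul, Matrix.det_mul, mul_comm, ← mul_assoc, ← Matrix.det_mul, hmap2]
  simp

open Polynomial in
theorem charpoly_diag' {n : ℕ} (d : Fin n → ℝ) :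
    (Matrix.diagonal d).charpoly = ∏ i, (X - C (d i)) := by
  rw [Matrix.charpoly_of_upperTriangular _ (Matrix.blockTriangular_diagonal d)]
  simp

/-- Let `A` be entrywise nonnegative, symmetric positive definite, and let
`x` be a nonzero entrywise nonnegative vector that is not an eigenvector of `A`. Then
`(c_k(A,x))_{k≥1}` is strictly increasing and bounded above by `ρ(A)`; moreover, if `x` is not
orthogonal to the eigenspace of `A` for the eigenvalue `ρ(A)`, then `c_k(A,x) → ρ(A)`. -/
theorem cSeq_strictMono_le_perron {n : ℕ}
    (A : Matrix (Fin n) (Fin n) ℝ) (x : Fin n → ℝ)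
    (hnonneg : ∀ i j, 0 ≤ A i j) (hpd : A.PosDef)
    (hx0 : x ≠ 0) (hx : ∀ i, 0 ≤ x i)
    (heig : ¬ ∃ μ : ℝ, A.mulVec x = μ • x) :
    (∀ k : ℕ, 1 ≤ k → cSeq A x k < cSeq A x (k + 1)) ∧
    (∀ k : ℕ, 1 ≤ k → cSeq A x k ≤ perronValue A) ∧
    ((∃ v : Fin n → ℝ, A.mulVec v = perronValue A • v ∧ x ⬝ᵥ v ≠ 0) →
      Tendsto (fun k : ℕ => cSeq A x k) atTop (nhds (perronValue A))) := by
  classical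
  have hn : 0 < n := by
    rcases Nat.eq_zero_or_pos n with h | h
    · subst h; exact absurd (Subsingleton.elim x 0) hx0
    · exact h
  haveI : Nonempty (Fin n) := ⟨⟨0, hn⟩⟩
  have hA : A.IsHermitian := hpd.1
  set U : Matrix (Fin n) (Fin n) ℝ := (hA.eigenvectorUnitary : Matrix (Fin n) (Fin n) ℝ) with hUdef
  set lam := hA.eigenvalues with hlamdef
  have hspec : A = U * diagonal lam * star U := by simpa using hA.spectral_theorem
  have hU1 : U * star U = 1 := Matrix.mem_unitaryGroup_iff.mp hA.eigenvectorUnitary.2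
  have hU2 : star U * U = 1 := Matrix.mem_unitaryGroup_iff'.mp hA.eigenvectorUnitary.2
  have hsU : star U = Uᵀ := by
    ext i j
    simp [Matrix.star_eq_conjTranspose, Matrix.conjTranspose_apply]
  have hUT : (star U)ᵀ = U := by rw [hsU, Matrix.transpose_transpose]
  have hpow : ∀ k : ℕ, A ^ k = U * diagonal (fun i => lam i ^ k) * star U := by
    intro k
    induction k with
    | zero => simpa using hU1.symm
    | succ k ih =>
      rw [pow_succ, ih, hspec]
      rw [show (U * diagonal (fun i => lam i ^ k) * star U) * (U * diagonal lam * star U)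
        = U * (diagonal (fun i => lam i ^ k) * (star U * U) * diagonal lam) * star U by
          simp only [Matrix.mul_assoc]]
      rw [hU2]
      simp [Matrix.diagonal_mul_diagonal, pow_succ]
  have hlam_pos : ∀ i, 0 < lam i := fun i => hpd.eigenvalues_pos i
  -- key quadratic form representation
  have key : ∀ (u : Fin n → ℝ) (k : ℕ),
      u ⬝ᵥ (A ^ k) *ᵥ u = ∑ i, ((star U *ᵥ u) i) ^ 2 * lam i ^ k := by
    intro u k
    rw [hpow k]
    rw [show U * diagonal (fun i => lam i ^ k) * star U = U * (diagonal (fun i => lam i ^ k)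
      * star U) from Matrix.mul_assoc _ _ _]
    rw [← Matrix.mulVec_mulVec, Matrix.dotProduct_mulVec, ← Matrix.mulVec_transpose,
      ← hsU, ← Matrix.mulVec_mulVec]
    rw [dotProduct]
    apply Finset.sum_congr rfl
    intro i _
    rw [Matrix.mulVec_diagonal]
    ring
  set y := star U *ᵥ x with hydef
  set a := fun i => (y i) ^ 2 with hadef
  have hUy : U *ᵥ y = x := by
    rw [hydef, Matrix.mulVec_mulVec, hU1, Matrix.one_mulVec]
  have hy0 : y ≠ 0 := by
    intro h
    rw [← hUy, h] at hx0
    exact hx0 (Matrix.mulVec_zero U)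
  obtain ⟨i₀, hi₀⟩ : ∃ i, y i ≠ 0 := by
    by_contra h
    push_neg at h
    exact hy0 (funext fun i => h i)
  set N := fun k : ℕ => ∑ i, a i * lam i ^ k with hNdef
  have keyN : ∀ k, x ⬝ᵥ (A ^ k) *ᵥ x = N k := fun k => key x k
  have ha_nonneg : ∀ i, 0 ≤ a i := fun i => sq_nonneg _
  have hNpos : ∀ k, 0 < N k := by
    intro k
    have hai : 0 < a i₀ := lt_of_le_of_ne (sq_nonneg _) (Ne.symm (pow_ne_zero 2 hi₀))
    have : 0 < a i₀ * lam i₀ ^ k := mul_pos hai (pow_pos (hlam_pos i₀) k)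
    refine Finset.sum_pos' (fun i _ => ?_) ⟨i₀, Finset.mem_univ _, this⟩
    exact mul_nonneg (ha_nonneg i) (pow_nonneg (hlam_pos i).le k)
  set lm := Finset.univ.sup' Finset.univ_nonempty lam with hlmdef
  have hle : ∀ i, lam i ≤ lm := fun i => Finset.le_sup' lam (Finset.mem_univ i)
  obtain ⟨im, -, him⟩ := Finset.exists_mem_eq_sup' (Finset.univ_nonempty (α := Fin n)) lam
  have hlm_eq : lm = lam im := him
  have hlm_pos : 0 < lm := by rw [hlm_eq]; exact hlam_pos im
  -- charpoly of A
  have hcharA : A.charpoly = ∏ i, (Polynomial.X - Polynomial.C (lam i)) := by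
    rw [hspec, charpoly_conj' U (star U) _ hU1 hU2, charpoly_diag']
  -- perronValue A = lm
  have perron_eq : perronValue A = lm := by
    have hset : {r : ℝ | ∃ μ : ℂ, ((A.map Complex.ofReal).charpoly).IsRoot μ ∧
        r = ‖μ‖} = Set.range lam := by
      ext r
      have hmapc : A.map Complex.ofReal = A.map (Complex.ofRealHom : ℝ →+* ℂ) := rfl
      constructor
      · rintro ⟨μ, hroot, rfl⟩
        rw [hmapc, Matrix.charpoly_map, hcharA, Polynomial.map_prod] at hroot
        simp only [Polynomial.IsRoot.def, Polynomial.eval_prod, Polynomial.map_sub,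
          Polynomial.map_X, Polynomial.map_C, Polynomial.eval_sub, Polynomial.eval_X,
          Polynomial.eval_C, Finset.prod_eq_zero_iff] at hroot
        obtain ⟨i, -, hi⟩ := hroot
        have hμ : μ = (lam i : ℂ) := by
          have := sub_eq_zero.mp hi
          simpa using this
        refine ⟨i, ?_⟩
        rw [hμ, Complex.norm_real, Real.norm_eq_abs, abs_of_pos (hlam_pos i)]
      · rintro ⟨i, rfl⟩
        refine ⟨(lam i : ℂ), ?_, by rw [Complex.norm_real, Real.norm_eq_abs, abs_of_pos (hlam_pos i)]⟩
        rw [hmapc, Matrix.charpoly_map, hcharA, Polynomial.map_prod]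
        simp only [Polynomial.IsRoot.def, Polynomial.eval_prod, Polynomial.map_sub,
          Polynomial.map_X, Polynomial.map_C, Polynomial.eval_sub, Polynomial.eval_X,
          Polynomial.eval_C, Finset.prod_eq_zero_iff]
        exact ⟨i, Finset.mem_univ i, by simp⟩
    rw [perronValue, hset]
    apply IsGreatest.csSup_eq
    constructor
    · exact ⟨im, him.symm⟩
    · rintro r ⟨i, rfl⟩
      exact hle i
  -- the c sequence in terms of N
  have hc : ∀ k : ℕ, 1 ≤ k → cSeq A x k = N k / N (k - 1) := by
    intro k hk
    rw [cSeq, keyN, keyN]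
  have hdot : ∀ (B : Matrix (Fin n) (Fin n) ℝ) (u w : Fin n → ℝ),
      (B *ᵥ u) ⬝ᵥ w = u ⬝ᵥ (Bᵀ *ᵥ w) := by
    intro B u w
    rw [dotProduct_comm, Matrix.dotProduct_mulVec, ← Matrix.mulVec_transpose,
      dotProduct_comm]
  have hAT : Aᵀ = A := by
    nth_rewrite 2 [← hA.eq]
    ext i j
    simp [Matrix.conjTranspose_apply]
  -- Part 1: strict monotonicity
  have part1 : ∀ k : ℕ, 1 ≤ k → cSeq A x k < cSeq A x (k + 1) := by
    intro k hk
    obtain ⟨k', rfl⟩ : ∃ k', k = k' + 1 := ⟨k - 1, (Nat.succ_pred_eq_of_pos hk).symm⟩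
    have hq : (0:ℝ) < N k' := hNpos k'
    have hp : (0:ℝ) < N (k' + 1) := hNpos (k' + 1)
    have hr : (0:ℝ) < N (k' + 2) := hNpos (k' + 2)
    -- Cauchy–Schwarz strict inequality via the z-vector trick
    set z := N k' • (A *ᵥ x) - N (k' + 1) • x with hzdef
    have hz0 : z ≠ 0 := by
      intro h
      apply heig
      refine ⟨N (k' + 1) / N k', ?_⟩
      have h' : N k' • (A *ᵥ x) = N (k' + 1) • x := by
        have := sub_eq_zero.mp h
        exact this
      have h2 := congrArg (fun w => (N k')⁻¹ • w) h'
      simp only [smul_smul, inv_mul_cancel₀ hq.ne', one_smul] at h2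
      rw [h2, div_eq_inv_mul]
    have hA2 : A * A ^ k' * A = A ^ (k' + 2) := by
      rw [show k' + 2 = (k' + 1) + 1 from rfl, pow_succ, pow_succ']
    have e1 : (A *ᵥ x) ⬝ᵥ (A ^ k') *ᵥ (A *ᵥ x) = N (k' + 2) := by
      rw [hdot, hAT, Matrix.mulVec_mulVec, Matrix.mulVec_mulVec, hA2, keyN]
    have e2 : x ⬝ᵥ (A ^ k') *ᵥ (A *ᵥ x) = N (k' + 1) := by
      rw [Matrix.mulVec_mulVec, ← pow_succ, keyN]
    have e3 : (A *ᵥ x) ⬝ᵥ (A ^ k') *ᵥ x = N (k' + 1) := by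
      rw [hdot, hAT, Matrix.mulVec_mulVec, ← pow_succ', keyN]
    have hQz : 0 < z ⬝ᵥ (A ^ k') *ᵥ z := by
      rw [key z k']
      have hz' : star U *ᵥ z ≠ 0 := by
        intro h
        apply hz0
        have := congrArg (fun w => U *ᵥ w) h
        simpa [Matrix.mulVec_mulVec, hU1, Matrix.one_mulVec] using this
      obtain ⟨j, hj⟩ : ∃ j, (star U *ᵥ z) j ≠ 0 := by
        by_contra h
        push_neg at h
        exact hz' (funext fun j => h j)
      refine Finset.sum_pos' (fun i _ => mul_nonneg (sq_nonneg _)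
        (pow_nonneg (hlam_pos i).le _)) ⟨j, Finset.mem_univ _, ?_⟩
      exact mul_pos (lt_of_le_of_ne (sq_nonneg _) (Ne.symm (pow_ne_zero 2 hj)))
        (pow_pos (hlam_pos j) _)
    have hexp : z ⬝ᵥ (A ^ k') *ᵥ z
        = N k' * (N k' * N (k' + 2) - N (k' + 1) ^ 2) := by
      rw [hzdef]
      simp only [Matrix.mulVec_sub, Matrix.mulVec_smul, sub_dotProduct, dotProduct_sub,
        smul_dotProduct, dotProduct_smul, smul_eq_mul]
      rw [e1, e2, e3, keyN]
      ring
    have hCS : N (k' + 1) ^ 2 < N k' * N (k' + 2) := by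
      nlinarith [hQz, hexp, hq]
    rw [hc _ hk, hc _ (by omega)]
    simp only [Nat.add_sub_cancel]
    rw [div_lt_div_iff₀ hq hp]
    nlinarith
  refine ⟨part1, ?_, ?_⟩
  -- Part 2: bounded by perron value
  · intro k hk
    rw [perron_eq, hc _ hk]
    obtain ⟨k', rfl⟩ : ∃ k', k = k' + 1 := ⟨k - 1, (Nat.succ_pred_eq_of_pos hk).symm⟩
    simp only [Nat.add_sub_cancel]
    rw [div_le_iff₀ (hNpos k')]
    show (∑ i, a i * lam i ^ (k' + 1)) ≤ lm * ∑ i, a i * lam i ^ k'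
    rw [Finset.mul_sum]
    apply Finset.sum_le_sum
    intro i _
    have h2 : 0 ≤ a i * lam i ^ k' := mul_nonneg (ha_nonneg i) (pow_nonneg (hlam_pos i).le _)
    calc a i * lam i ^ (k' + 1) = (a i * lam i ^ k') * lam i := by ring
      _ ≤ (a i * lam i ^ k') * lm := mul_le_mul_of_nonneg_left (hle i) h2
      _ = lm * (a i * lam i ^ k') := mul_comm _ _
  -- Part 3: convergence
  · rintro ⟨v, hv, hxv⟩
    rw [perron_eq] at hv ⊢
    set w := star U *ᵥ v with hwdef
    have hDw : ∀ i, lam i * w i = lm * w i := by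
      have h1 : star U *ᵥ (A *ᵥ v) = diagonal lam *ᵥ w := by
        rw [Matrix.mulVec_mulVec, hspec]
        rw [show star U * (U * diagonal lam * star U) = (star U * U) * diagonal lam * star U by
          simp only [Matrix.mul_assoc]]
        rw [hU2, Matrix.one_mul, ← Matrix.mulVec_mulVec]
      have h2 : star U *ᵥ (lm • v) = lm • w := Matrix.mulVec_smul _ _ _
      rw [hv, h2] at h1
      intro i
      have := congrFun h1.symm i
      simpa [Matrix.mulVec_diagonal] using this
    have hyw : x ⬝ᵥ v = y ⬝ᵥ w := by
      symm
      rw [hydef, hwdef, hdot, hUT, Matrix.mulVec_mulVec, hU1, Matrix.one_mulVec]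
    obtain ⟨j₀, hj₀⟩ : ∃ j, y j * w j ≠ 0 := by
      by_contra h
      push_neg at h
      apply hxv
      rw [hyw, dotProduct]
      exact Finset.sum_eq_zero fun i _ => h i
    have hyj : y j₀ ≠ 0 := fun h => hj₀ (by rw [h, zero_mul])
    have hwj : w j₀ ≠ 0 := fun h => hj₀ (by rw [h, mul_zero])
    have hlamj : lam j₀ = lm := by
      have := hDw j₀
      have h' : (lam j₀ - lm) * w j₀ = 0 := by ring_nf; linarith [this]
      rcases mul_eq_zero.mp h' with h | h
      · linarith [sub_eq_zero.mp h]
      · exact absurd h hwj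
    set S := ∑ i, (if lam i = lm then a i else 0) with hSdef
    have hSpos : 0 < S := by
      have haj : 0 < a j₀ := lt_of_le_of_ne (sq_nonneg _) (Ne.symm (pow_ne_zero 2 hyj))
      have hj : (0:ℝ) < (if lam j₀ = lm then a j₀ else 0) := by rw [if_pos hlamj]; exact haj
      refine lt_of_lt_of_le hj ?_
      apply Finset.single_le_sum (f := fun i => if lam i = lm then a i else 0)
        (fun i _ => ?_) (Finset.mem_univ j₀)
      split_ifs
      · exact ha_nonneg i
      · exact le_rfl
    set M := fun k : ℕ => ∑ i, a i * (lam i / lm) ^ k with hMdef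
    have hMtend : Tendsto M atTop (nhds S) := by
      rw [hSdef]
      apply tendsto_finset_sum
      intro i _
      by_cases hi : lam i = lm
      · simp only [hi, div_self hlm_pos.ne', one_pow, mul_one, if_pos]
        exact tendsto_const_nhds
      · rw [if_neg hi]
        have h0 : (0:ℝ) ≤ lam i / lm := div_nonneg (hlam_pos i).le hlm_pos.le
        have h1 : lam i / lm < 1 := (div_lt_one hlm_pos).mpr (lt_of_le_of_ne (hle i) hi)
        have := (tendsto_pow_atTop_nhds_zero_of_lt_one h0 h1).const_mul (a i)
        simpa using this
    have hMpos : ∀ k, 0 < M k := by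
      intro k
      refine Finset.sum_pos' (fun i _ => mul_nonneg (ha_nonneg i)
        (pow_nonneg (div_nonneg (hlam_pos i).le hlm_pos.le) _)) ⟨i₀, Finset.mem_univ _, ?_⟩
      exact mul_pos (lt_of_le_of_ne (sq_nonneg _) (Ne.symm (pow_ne_zero 2 hi₀)))
        (pow_pos (div_pos (hlam_pos i₀) hlm_pos) _)
    have hNM : ∀ k, N k = lm ^ k * M k := by
      intro k
      rw [hNdef, hMdef, Finset.mul_sum]
      apply Finset.sum_congr rfl
      intro i _
      rw [div_pow, mul_comm (lm ^ k) _, mul_assoc, div_mul_cancel₀]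
      exact pow_ne_zero k hlm_pos.ne'
    have hratio : ∀ k : ℕ, N (k + 1) / N k = lm * (M (k + 1) / M k) := by
      intro k
      rw [hNM, hNM, pow_succ]
      field_simp [hlm_pos.ne', (hMpos k).ne', (hMpos (k+1)).ne']
    have hg : Tendsto (fun k => N (k + 1) / N k) atTop (nhds lm) := by
      have hM1 : Tendsto (fun k => M (k + 1)) atTop (nhds S) :=
        hMtend.comp (tendsto_add_atTop_nat 1)
      have := (hM1.div hMtend hSpos.ne').const_mul lm
      simp only [div_self hSpos.ne', mul_one] at this
      apply this.congr
      intro k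
      simp only [Pi.div_apply]
      rw [hratio k]
    have hfinal : Tendsto (fun k : ℕ => cSeq A x k) atTop (nhds lm) := by
      have hcomp : Tendsto (fun k : ℕ => N (k - 1 + 1) / N (k - 1)) atTop (nhds lm) :=
        hg.comp (tendsto_sub_atTop_nat 1)
      apply hcomp.congr'
      filter_upwards [eventually_ge_atTop 1] with k hk
      rw [Nat.sub_add_cancel hk, hc _ hk]
    exact hfinal
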